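/- For a nonempty subset B ⊆ A, the restriction map ρ ↦ ρ ∩ B^m maps m-ary generalized quasiorders on A onto generalized quasiorders on B; moreover every generalized quasiorder on B arises as such a restriction. -/
import Mathlib

/-- An m-ary relation is generalized transitive if whenever every row and every
column of an m×m matrix belongs to it, so does the diagonal. -/
def IsGenTransitive {A : Type*} {m : ℕ} (ρ : Set (Fin m → A)) : Prop :=
  ∀ M : Fin m → Fin m → A,
    (∀ i, (fun j => M i j) ∈ ρ) → (∀ j, (fun i => M i j) ∈ ρ) →
    (fun i => M i i) ∈ ρ

/-- A generalized quasiorder: reflexive and generalized transitive. -/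
def IsGQuord {A : Type*} {m : ℕ} (ρ : Set (Fin m → A)) : Prop :=
  (∀ a : A, (fun _ => a) ∈ ρ) ∧ IsGenTransitive ρ

theorem restriction_gQuord {A : Type*} {m : ℕ} (B : Set A) (hB : B.Nonempty) :
    (∀ ρ : Set (Fin m → A), IsGQuord ρ →
        IsGQuord {b : Fin m → B | (fun i => (b i : A)) ∈ ρ}) ∧
    (∀ σ : Set (Fin m → B), IsGQuord σ →
        ∃ ρ : Set (Fin m → A), IsGQuord ρ ∧
          {b : Fin m → B | (fun i => (b i : A)) ∈ ρ} = σ) := by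
  constructor
  · rintro ρ ⟨hrefl, htr⟩
    refine ⟨fun b => hrefl b, fun M hr hc => htr (fun i j => (M i j : A)) hr hc⟩
  · rintro σ ⟨hrefl, htr⟩
    classical
    let p : A → B := fun a => if h : a ∈ B then ⟨a, h⟩ else ⟨hB.choose, hB.choose_spec⟩
    have hp : ∀ b : B, p (b : A) = b := fun b => by simp [p]
    refine ⟨{a : Fin m → A | (fun i => p (a i)) ∈ σ}, ⟨fun a => hrefl (p a), ?_⟩, ?_⟩
    · intro M hr hc
      exact htr (fun i j => p (M i j)) hr hc
    · ext b
      simp only [Set.mem_setOf_eq]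
      constructor
      · intro h
        have : (fun i => p ((b i : A))) = b := funext fun i => hp (b i)
        rwa [this] at h
      · intro h
        have : (fun i => p ((b i : A))) = b := funext fun i => hp (b i)
        rwa [this]
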